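/- arXiv:1807.02138 — 2 statements merged into one kernel-verified Lean document; each statement's English description precedes it below -/
import Mathlib

section
/- Let n ≥ 3, d ≥ 2, and let a_1,…,a_n be integers with 0 ≤ a_i ≤ d−1 such that no value occurs among a_1,…,a_n more than n−2 times (i.e. at most n−2 of the integers a_i are equal). Then there exists a non-zero homogeneous polynomial f of degree d in ℂ[y_1,…,y_n] such that (x_1 + ⋯ + x_n) ∘ f = 0 and every monomial y_1^{α_1}⋯y_n^{α_n} ∈ supp(f) satisfies a_1α_1 + ⋯ + a_nα_n ≢ 0 (mod d). -/
open MvPolynomial Finset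

/-- Strict triangle inequality for two distinct unit complex numbers. -/
private lemma abs_add_lt_two {x y : ℂ} (hx : ‖x‖ = 1) (hy : ‖y‖ = 1)
    (hxy : x ≠ y) : ‖x + y‖ < 2 := by
  have h2 : ‖x * (starRingEnd ℂ) y‖ = 1 := by
    rw [norm_mul, Complex.norm_conj, hx, hy, one_mul]
  have key : (x * (starRingEnd ℂ) y).re < 1 := by
    have h1 : (x * (starRingEnd ℂ) y).re ≤ ‖x * (starRingEnd ℂ) y‖ :=
      Complex.re_le_norm _
    rw [h2] at h1
    rcases lt_or_eq_of_le h1 with h | h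
    · exact h
    · exfalso
      set u := x * (starRingEnd ℂ) y with hu
      have hsq : ‖u‖ ^ 2 = Complex.normSq u := Complex.sq_norm u
      rw [h2] at hsq
      rw [Complex.normSq_apply] at hsq
      have him : u.im = 0 := by nlinarith [sq_nonneg u.im]
      have hu1 : u = 1 := by
        apply Complex.ext
        · simp only [Complex.one_re]
          exact h
        · simpa using him
      apply hxy
      have hy2 : (starRingEnd ℂ) y * y = 1 := by
        rw [mul_comm, Complex.mul_conj]
        norm_cast
        rw [Complex.normSq_eq_norm_sq, hy, one_pow]
      calc x = x * ((starRingEnd ℂ) y * y) := by rw [hy2, mul_one]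
        _ = u * y := by rw [hu, mul_assoc]
        _ = y := by rw [hu1, one_mul]
  have hnsx : Complex.normSq x = 1 := by rw [Complex.normSq_eq_norm_sq, hx, one_pow]
  have hnsy : Complex.normSq y = 1 := by rw [Complex.normSq_eq_norm_sq, hy, one_pow]
  have hns : Complex.normSq (x + y) < 4 := by
    rw [Complex.normSq_add, hnsx, hnsy]; linarith
  have hsq : ‖x + y‖ ^ 2 < 2 ^ 2 := by
    rw [Complex.sq_norm]; norm_num; linarith
  exact lt_of_pow_lt_pow_left₀ 2 (by norm_num) hsq

private lemma pow_ne_pow_of_ne {d : ℕ} {ξ : ℂ} (hξ : IsPrimitiveRoot ξ d) (hξ0 : ξ ≠ 0)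
    {u v : ℕ} (hu : u < d) (hv : v < d) (huv : u ≠ v) (w : ℕ) :
    ξ ^ (w + u) ≠ ξ ^ (w + v) := by
  intro h
  rw [pow_add, pow_add] at h
  have hw : ξ ^ w ≠ 0 := pow_ne_zero _ hξ0
  have : ξ ^ u = ξ ^ v := mul_left_cancel₀ hw h
  exact huv (hξ.pow_inj hu hv this)

section Key

variable {n d : ℕ}

/-- linear form with coefficients `c`. -/
private noncomputable def LF (c : Fin n → ℂ) : MvPolynomial (Fin n) ℂ :=
  ∑ t, monomial (Finsupp.single t 1) (c t)

private lemma LF_isHomogeneous (c : Fin n → ℂ) : (LF c).IsHomogeneous 1 := by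
  apply IsHomogeneous.sum
  intro t _
  apply isHomogeneous_monomial
  simp [Finsupp.degree_single]

private lemma pderiv_LF (c : Fin n → ℂ) (t : Fin n) : pderiv t (LF c) = C (c t) := by
  unfold LF
  rw [map_sum]
  rw [Finset.sum_eq_single t]
  · rw [pderiv_monomial]
    simp
  · intro s _ hst
    rw [pderiv_monomial]
    rw [Finsupp.single_apply]
    simp [hst]
  · intro h
    exact absurd (Finset.mem_univ t) h

private lemma sum_pderiv_LF (c : Fin n → ℂ) :
    (∑ t, pderiv t (LF c)) = C (∑ t, c t) := by
  simp_rw [pderiv_LF]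
  rw [map_sum]

private lemma eval_LF (c : Fin n → ℂ) (y : Fin n → ℂ) :
    eval y (LF c) = ∑ t, c t * y t := by
  unfold LF
  rw [map_sum]
  apply Finset.sum_congr rfl
  intro t _
  rw [eval_monomial]
  rw [Finsupp.prod_single_index (by simp)]
  rw [pow_one]

private lemma aeval_scale_monomial (a : Fin n → ℕ) (ξ : ℂ) (v : Fin n →₀ ℕ) (co : ℂ) :
    (aeval (fun t => C (ξ ^ a t) * X t) (monomial v co) : MvPolynomial (Fin n) ℂ)
      = monomial v (ξ ^ (∑ t, a t * v t) * co) := by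
  rw [aeval_monomial]
  rw [Finsupp.prod_fintype _ _ (fun t => pow_zero _)]
  have hterm : ∀ t, (C (ξ ^ a t) * X t : MvPolynomial (Fin n) ℂ) ^ v t
      = C (ξ ^ (a t * v t)) * X t ^ v t := by
    intro t
    rw [mul_pow, ← C_pow, ← pow_mul]
  simp_rw [hterm]
  rw [Finset.prod_mul_distrib, ← map_prod, Finset.prod_pow_eq_pow_sum]
  have hX : (∏ t, (X t : MvPolynomial (Fin n) ℂ) ^ v t) = monomial v 1 := by
    rw [← prod_X_pow_eq_monomial]
    symm
    apply Finset.prod_subset (Finset.subset_univ _)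
    intro x _ hx
    rw [Finsupp.notMem_support_iff] at hx
    rw [hx, pow_zero]
  rw [hX]
  rw [algebraMap_eq]
  rw [C_mul_monomial, C_mul_monomial]
  ring_nf

private lemma coeff_scale (a : Fin n → ℕ) (ξ : ℂ) (g : MvPolynomial (Fin n) ℂ)
    (m : Fin n →₀ ℕ) :
    coeff m (aeval (fun t => C (ξ ^ a t) * X t) g : MvPolynomial (Fin n) ℂ)
      = ξ ^ (∑ t, a t * m t) * coeff m g := by
  conv_lhs => rw [g.as_sum, map_sum]
  simp_rw [aeval_scale_monomial]
  rw [coeff_sum]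
  simp_rw [coeff_monomial]
  have hcongr : ∀ v ∈ g.support, (if v = m then ξ ^ (∑ t, a t * v t) * coeff v g else 0)
      = (if v = m then ξ ^ (∑ t, a t * m t) * coeff v g else 0) := by
    intro v _
    split
    · next h => subst h; rfl
    · rfl
  rw [Finset.sum_congr rfl hcongr]
  rw [Finset.sum_ite_eq' g.support m (fun v => ξ ^ (∑ t, a t * m t) * coeff v g)]
  by_cases h : m ∈ g.support
  · rw [if_pos h]
  · rw [if_neg h, MvPolynomial.notMem_support_iff.mp h, mul_zero]

end Key

private lemma key_construction {n d : ℕ} (hd : 2 ≤ d)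
    (a : Fin n → ℕ) (ha : ∀ i, a i ≤ d - 1)
    (ξ : ℂ) (hξ : IsPrimitiveRoot ξ d) (q : Fin n → ℂ)
    (h1 : (∑ t, ξ ^ (a t) * q t) = 0) (h2 : (∑ t, ξ ^ (2 * a t) * q t) = 0)
    (i k : Fin n) (hik : a i ≠ a k) (hqi : q i ≠ 0) (hqk : q k ≠ 0) :
    ∃ f : MvPolynomial (Fin n) ℂ, f ≠ 0 ∧ f.IsHomogeneous d ∧
      (∑ t, MvPolynomial.pderiv t f) = 0 ∧
      ∀ m ∈ f.support, ¬ d ∣ ∑ j, a j * m j := by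
  have hd0 : d ≠ 0 := by omega
  have hξd : ξ ^ d = 1 := hξ.pow_eq_one
  have habs : ‖ξ‖ = 1 := by
    have h1' : ‖ξ‖ ^ d = 1 := by rw [← norm_pow, hξd, norm_one]
    rcases lt_trichotomy ‖ξ‖ 1 with h | h | h
    · have := pow_lt_one₀ (norm_nonneg _) h hd0
      rw [h1'] at this; exact absurd this (lt_irrefl 1)
    · exact h
    · have := one_lt_pow₀ h hd0
      rw [h1'] at this; exact absurd this (lt_irrefl 1)
  have hξ0 : ξ ≠ 0 := by
    intro h
    rw [h, norm_zero] at habs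
    norm_num at habs
  have hlt : ∀ j, a j < d := fun j => by have := ha j; omega
  have hine : i ≠ k := fun h => hik (by rw [h])
  -- the two linear forms
  set b : Fin n → ℂ := fun t => ξ ^ (a t) * q t with hb
  set c : Fin n → ℂ := fun t => ξ ^ (2 * a t) * q t with hc
  have hbc : ∀ t, c t = ξ ^ (a t) * b t := by
    intro t
    simp only [hb, hc, two_mul, pow_add]
    ring
  set f : MvPolynomial (Fin n) ℂ := (LF b) ^ d - (LF c) ^ d with hf
  -- the scaling endomorphism
  set S : MvPolynomial (Fin n) ℂ →ₐ[ℂ] MvPolynomial (Fin n) ℂ :=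
    aeval (fun t => C (ξ ^ a t) * X t) with hS
  have hSL : S (LF b) = LF c := by
    rw [hS]
    unfold LF
    rw [map_sum]
    apply Finset.sum_congr rfl
    intro t _
    rw [aeval_scale_monomial]
    congr 1
    have hexp : (∑ s, a s * (Finsupp.single t 1 : Fin n →₀ ℕ) s) = a t := by
      rw [Finset.sum_eq_single t]
      · simp
      · intro s _ hst
        rw [Finsupp.single_apply, if_neg (fun h => hst h.symm), mul_zero]
      · intro h; exact absurd (Finset.mem_univ t) h
    rw [hexp, ← hbc t]
  -- coefficient identity
  have hcoeff : ∀ m : Fin n →₀ ℕ,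
      coeff m f = (1 - ξ ^ (∑ j, a j * m j)) * coeff m ((LF b) ^ d) := by
    intro m
    have h2d : (LF c) ^ d = S ((LF b) ^ d) := by rw [map_pow, hSL]
    rw [hf, coeff_sub, h2d, hS, coeff_scale]
    ring
  refine ⟨f, ?_, ?_, ?_, ?_⟩
  · -- f ≠ 0 via evaluation
    have hbi : b i ≠ 0 := mul_ne_zero (pow_ne_zero _ hξ0) hqi
    have hbk : b k ≠ 0 := mul_ne_zero (pow_ne_zero _ hξ0) hqk
    set y : Fin n → ℂ := fun t =>
      (if t = i then (b i)⁻¹ else 0) + (if t = k then (b k)⁻¹ else 0) with hy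
    have hsum : ∀ c' : Fin n → ℂ, (∑ t, c' t * y t)
        = c' i * (b i)⁻¹ + c' k * (b k)⁻¹ := by
      intro c'
      simp only [hy, mul_add, Finset.sum_add_distrib, mul_ite, mul_zero,
        Finset.sum_ite_eq', Finset.mem_univ, if_true]
    have hev1 : eval y (LF b) = 2 := by
      rw [eval_LF, hsum, mul_inv_cancel₀ hbi, mul_inv_cancel₀ hbk]
      norm_num
    have hdiv : ∀ (u : ℂ) {z : ℂ}, z ≠ 0 → u * z * z⁻¹ = u := by
      intro u z hz
      rw [mul_assoc, mul_inv_cancel₀ hz, mul_one]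
    have hev2 : eval y (LF c) = ξ ^ (a i) + ξ ^ (a k) := by
      rw [eval_LF, hsum, hbc i, hbc k, hdiv _ hbi, hdiv _ hbk]
    have hne : ξ ^ (a i) ≠ ξ ^ (a k) := fun h => hik (hξ.pow_inj (hlt i) (hlt k) h)
    have habs_lt : ‖ξ ^ (a i) + ξ ^ (a k)‖ < 2 :=
      abs_add_lt_two (by rw [norm_pow, habs, one_pow]) (by rw [norm_pow, habs, one_pow]) hne
    intro hf0
    have : eval y f = 0 := by rw [hf0, map_zero]
    rw [hf, map_sub, map_pow, map_pow, hev1, hev2, sub_eq_zero] at this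
    have hA : ‖(2 : ℂ) ^ d‖ = 2 ^ d := by
      rw [norm_pow, Complex.norm_two]
    have hB : ‖(ξ ^ (a i) + ξ ^ (a k)) ^ d‖ < 2 ^ d := by
      rw [norm_pow]
      exact pow_lt_pow_left₀ habs_lt (norm_nonneg _) hd0
    rw [← this, hA] at hB
    exact absurd hB (lt_irrefl _)
  · -- homogeneous
    have h1h : ((LF b) ^ d).IsHomogeneous d := by
      have := (LF_isHomogeneous b).pow d
      rwa [one_mul] at this
    have h2h : ((LF c) ^ d).IsHomogeneous d := by
      have := (LF_isHomogeneous c).pow d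
      rwa [one_mul] at this
    exact h1h.sub h2h
  · -- derivative
    have hD : ∀ (c' : Fin n → ℂ), (∑ t, c' t) = 0 →
        (∑ t, pderiv t ((LF c') ^ d)) = 0 := by
      intro c' h0
      have hlp : ∀ t, pderiv t ((LF c') ^ d)
          = d • (LF c') ^ (d - 1) • pderiv t (LF c') := fun t =>
        (pderiv t).leibniz_pow (LF c') d
      simp_rw [hlp, pderiv_LF]
      rw [← Finset.smul_sum, ← Finset.smul_sum, ← map_sum, h0, map_zero,
        smul_zero, smul_zero]
    have hb0 : (∑ t, b t) = 0 := h1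
    have hc0 : (∑ t, c t) = 0 := h2
    rw [hf]
    have : ∀ t, pderiv t ((LF b) ^ d - (LF c) ^ d)
        = pderiv t ((LF b) ^ d) - pderiv t ((LF c) ^ d) := fun t => map_sub _ _ _
    simp_rw [this]
    rw [Finset.sum_sub_distrib, hD b hb0, hD c hc0, sub_zero]
  · -- support
    intro m hm hdvd
    rw [MvPolynomial.mem_support_iff] at hm
    apply hm
    rw [hcoeff m, (hξ.pow_eq_one_iff_dvd _).mpr hdvd, sub_self, zero_mul]

/-- For `n ≥ 3`, `d ≥ 2` and `0 ≤ a_1, …, a_n ≤ d-1` with no value occurring more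
than `n - 2` times among the `a_i`, there is a non-zero form `f` of degree `d` in
`ℂ[y_1,…,y_n]` with `(x_1 + ⋯ + x_n) ∘ f = 0` (each `x_i` acting as `∂/∂y_i`) all of
whose monomials `y^α` satisfy `a_1α_1 + ⋯ + a_nα_n ≢ 0 (mod d)`, i.e. none of them is
fixed by the action `x_i ↦ ξ^{a_i} x_i` of `ℤ/dℤ`. -/
theorem exists_form_killing_surjectivity {n : ℕ} (hn : 3 ≤ n) (d : ℕ) (hd : 2 ≤ d)
    (a : Fin n → ℕ) (ha : ∀ i, a i ≤ d - 1)
    (hocc : ∀ v : ℕ, ((Finset.univ : Finset (Fin n)).filter fun i => a i = v).card ≤ n - 2) :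
    ∃ f : MvPolynomial (Fin n) ℂ, f ≠ 0 ∧ f.IsHomogeneous d ∧
      (∑ t, MvPolynomial.pderiv t f) = 0 ∧
      ∀ m ∈ f.support, ¬ d ∣ ∑ i, a i * m i := by
  have hd0 : d ≠ 0 := by omega
  set ξ : ℂ := Complex.exp (2 * Real.pi * Complex.I / d) with hξdef
  have hξ : IsPrimitiveRoot ξ d := Complex.isPrimitiveRoot_exp d hd0
  have hξ0 : ξ ≠ 0 := by
    intro h
    have := hξ.pow_eq_one
    rw [h, zero_pow hd0] at this
    exact zero_ne_one this
  have hlt : ∀ j, a j < d := fun j => by have := ha j; omega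
  by_cases hex : ∃ i1 i2 i3 : Fin n, a i1 ≠ a i2 ∧ a i1 ≠ a i3 ∧ a i2 ≠ a i3
  · obtain ⟨i1, i2, i3, h12, h13, h23⟩ := hex
    have hne12 : i1 ≠ i2 := fun h => h12 (by rw [h])
    have hne13 : i1 ≠ i3 := fun h => h13 (by rw [h])
    have hne23 : i2 ≠ i3 := fun h => h23 (by rw [h])
    set A1 : ℂ := ξ ^ (a i2 + 2 * a i3) - ξ ^ (a i3 + 2 * a i2) with hA1
    set A2 : ℂ := ξ ^ (a i3 + 2 * a i1) - ξ ^ (a i1 + 2 * a i3) with hA2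
    set A3 : ℂ := ξ ^ (a i1 + 2 * a i2) - ξ ^ (a i2 + 2 * a i1) with hA3
    set q : Fin n → ℂ := fun t =>
      (if t = i1 then A1 else 0) + (if t = i2 then A2 else 0) + (if t = i3 then A3 else 0)
      with hq
    have hsum : ∀ e : Fin n → ℂ, (∑ t, e t * q t)
        = e i1 * A1 + e i2 * A2 + e i3 * A3 := by
      intro e
      simp only [hq, mul_add, Finset.sum_add_distrib, mul_ite, mul_zero,
        Finset.sum_ite_eq', Finset.mem_univ, if_true]
    have h1 : (∑ t, ξ ^ (a t) * q t) = 0 := by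
      rw [hsum (fun t => ξ ^ (a t))]
      rw [hA1, hA2, hA3]
      ring
    have h2 : (∑ t, ξ ^ (2 * a t) * q t) = 0 := by
      rw [hsum (fun t => ξ ^ (2 * a t))]
      rw [hA1, hA2, hA3]
      ring
    have hq1 : q i1 = A1 := by
      simp [hq, hne12, hne13]
    have hq2 : q i2 = A2 := by
      simp [hq, hne12.symm, hne23]
    have hA1ne : A1 ≠ 0 := by
      rw [hA1, sub_ne_zero]
      have e1 : a i2 + 2 * a i3 = (a i2 + a i3) + a i3 := by ring
      have e2 : a i3 + 2 * a i2 = (a i2 + a i3) + a i2 := by ring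
      rw [e1, e2]
      exact pow_ne_pow_of_ne hξ hξ0 (hlt i3) (hlt i2) (fun h => h23 h.symm) _
    have hA2ne : A2 ≠ 0 := by
      rw [hA2, sub_ne_zero]
      have e1 : a i3 + 2 * a i1 = (a i1 + a i3) + a i1 := by ring
      have e2 : a i1 + 2 * a i3 = (a i1 + a i3) + a i3 := by ring
      rw [e1, e2]
      exact pow_ne_pow_of_ne hξ hξ0 (hlt i1) (hlt i3) (fun h => h13 h) _
    exact key_construction hd a ha ξ hξ q h1 h2 i1 i2 h12
      (by rw [hq1]; exact hA1ne) (by rw [hq2]; exact hA2ne)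
  · push_neg at hex
    -- at most two values; find the two classes
    have hnall : ∃ i0 k0 : Fin n, a i0 ≠ a k0 := by
      by_contra hall
      push_neg at hall
      have h0 : 0 < n := by omega
      have hfil : (Finset.univ.filter fun t => a t = a ⟨0, h0⟩) = Finset.univ := by
        ext t
        simp [hall t ⟨0, h0⟩]
      have := hocc (a ⟨0, h0⟩)
      rw [hfil, Finset.card_univ, Fintype.card_fin] at this
      omega
    obtain ⟨i0, k0, hik0⟩ := hnall
    have htwo : ∀ t, a t = a i0 ∨ a t = a k0 := by
      intro t
      by_contra hcon
      push_neg at hcon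
      have := hex i0 k0 t hik0 (fun h => hcon.1 h.symm)
      exact hcon.2 this.symm
    set Sv := Finset.univ.filter (fun t => a t = a i0) with hSv
    set Sw := Finset.univ.filter (fun t => a t = a k0) with hSw
    have hdisj : Disjoint Sv Sw := by
      rw [Finset.disjoint_left]
      intro t htv htw
      rw [hSv, Finset.mem_filter] at htv
      rw [hSw, Finset.mem_filter] at htw
      exact hik0 (htv.2 ▸ htw.2 ▸ rfl)
    have hunion : Sv ∪ Sw = Finset.univ := by
      ext t
      simp only [Finset.mem_union, hSv, hSw, Finset.mem_filter, Finset.mem_univ,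
        true_and, iff_true]
      exact htwo t
    have hcard : Sv.card + Sw.card = n := by
      rw [← Finset.card_union_of_disjoint hdisj, hunion, Finset.card_univ, Fintype.card_fin]
    have hv2 : 1 < Sv.card := by
      have h1 := hocc (a i0)
      have h2 := hocc (a k0)
      rw [← hSv] at h1
      rw [← hSw] at h2
      omega
    have hw2 : 1 < Sw.card := by
      have h1 := hocc (a i0)
      rw [← hSv] at h1
      omega
    obtain ⟨j0, hj0S, hj0ne⟩ := Finset.exists_mem_ne hv2 i0
    obtain ⟨l0, hl0S, hl0ne⟩ := Finset.exists_mem_ne hw2 k0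
    rw [hSv, Finset.mem_filter] at hj0S
    rw [hSw, Finset.mem_filter] at hl0S
    have haj0 : a j0 = a i0 := hj0S.2
    have hal0 : a l0 = a k0 := hl0S.2
    have hne_ik : i0 ≠ k0 := fun h => hik0 (by rw [h])
    have hne_il : i0 ≠ l0 := fun h => hik0 (by rw [h, hal0])
    have hne_jk : j0 ≠ k0 := fun h => hik0 (by rw [← haj0, h])
    have hne_jl : j0 ≠ l0 := fun h => hik0 (by rw [← haj0, h, hal0])
    set q : Fin n → ℂ := fun t =>
      ((if t = i0 then 1 else 0) - (if t = j0 then 1 else 0))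
      + ((if t = k0 then 1 else 0) - (if t = l0 then 1 else 0)) with hq
    have hsum : ∀ e : Fin n → ℂ, (∑ t, e t * q t)
        = (e i0 - e j0) + (e k0 - e l0) := by
      intro e
      simp only [hq, mul_add, mul_sub, Finset.sum_add_distrib, Finset.sum_sub_distrib,
        mul_ite, mul_one, mul_zero, Finset.sum_ite_eq', Finset.mem_univ, if_true]
    have h1 : (∑ t, ξ ^ (a t) * q t) = 0 := by
      rw [hsum (fun t => ξ ^ (a t))]
      simp only [haj0, hal0]
      ring
    have h2 : (∑ t, ξ ^ (2 * a t) * q t) = 0 := by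
      rw [hsum (fun t => ξ ^ (2 * a t))]
      simp only [haj0, hal0]
      ring
    have hni0j0 : i0 ≠ j0 := fun h => hj0ne h.symm
    have hnk0l0 : k0 ≠ l0 := fun h => hl0ne h.symm
    have hq1 : q i0 = 1 := by
      simp [hq, hni0j0, hne_ik, hne_il]
    have hq2 : q k0 = 1 := by
      simp [hq, hne_ik.symm, hne_jk.symm, hnk0l0]
    exact key_construction hd a ha ξ hξ q h1 h2 i0 k0 hik0
      (by rw [hq1]; exact one_ne_zero) (by rw [hq2]; exact one_ne_zero)
end

section
/- Let d ≥ 2, let ξ = e^{2πi/d} ∈ ℂ, and in ℂ[x,y,z] let F = Π_{j=0}^{d−1} (ξ^j x + ξ^{−j} y + z)(ξ^j x + ξ^{−j} y − z), a homogeneous polynomial of degree 2d. Then the number of monomials with non-zero coefficient in F is d + 3 if d is odd, and 2d + 5 if d is even. -/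
open MvPolynomial Finset
open Finset

/-- Dickson polynomial (first kind) coefficients: `x^n + y^n = ∑ k, dc n k (xy)^k (x+y)^(n-2k)`. -/
def dc : ℕ → ℕ → ℤ
  | 0, 0 => 2
  | 0, _+1 => 0
  | 1, 0 => 1
  | 1, _+1 => 0
  | (n+2), 0 => dc (n+1) 0
  | (n+2), (k+1) => dc (n+1) (k+1) - dc n k

lemma dc_eq_zero : ∀ n k : ℕ, n < 2*k → dc n k = 0
  | 0, k+1, _ => rfl
  | 1, k+1, _ => rfl
  | (n+2), (k+1), h => by
      rw [dc, dc_eq_zero (n+1) (k+1) (by omega), dc_eq_zero n k (by omega), sub_zero]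

lemma dc_sign : ∀ n k : ℕ, 2*k ≤ n → 0 < (-1)^k * dc n k
  | 0, 0, _ => by norm_num [dc]
  | 1, 0, _ => by norm_num [dc]
  | (n+2), 0, _ => by
      have := dc_sign (n+1) 0 (by omega)
      simpa [dc] using this
  | (n+2), (k+1), h => by
      rw [dc]
      rcases Nat.lt_or_ge (n+1) (2*(k+1)) with h1 | h1
      · have h2 : n = 2*k := by omega
        rw [dc_eq_zero (n+1) (k+1) h1]
        have := dc_sign n k (by omega)
        rw [pow_succ]
        nlinarith [this]
      · have i1 := dc_sign (n+1) (k+1) h1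
        have i2 := dc_sign n k (by omega)
        rw [pow_succ] at i1 ⊢
        nlinarith [i1, i2]

lemma dc_identity (n : ℕ) (α β : ℂ) :
    α^n + β^n = ∑ k ∈ range (n+1), (dc n k : ℂ) * (α*β)^k * (α+β)^(n - 2*k) := by
  induction n using Nat.strong_induction_on with
  | _ n ih =>
    match n with
    | 0 => norm_num [dc]
    | 1 => simp [dc, Finset.sum_range_succ]
    | (n+2) =>
      have e1 := ih (n+1) (by omega)
      have e2 := ih n (by omega)
      have key : α^(n+2) + β^(n+2)
          = (α+β) * (α^(n+1) + β^(n+1)) - (α*β) * (α^n + β^n) := by ring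
      rw [key, e1, e2, Finset.mul_sum, Finset.mul_sum]
      have hA : ∑ k ∈ range (n+2), (α+β) * ((dc (n+1) k : ℂ) * (α*β)^k * (α+β)^(n+1-2*k))
          = ∑ k ∈ range (n+2), (dc (n+1) k : ℂ) * (α*β)^k * (α+β)^(n+2-2*k) := by
        refine Finset.sum_congr rfl fun k _ => ?_
        rcases Nat.lt_or_ge (n+1) (2*k) with h1 | h1
        · rw [dc_eq_zero _ _ h1]; ring
        · have : n+2-2*k = (n+1-2*k)+1 := by omega
          rw [this, pow_succ]; ring
      rw [hA]
      have hB : ∑ k ∈ range (n+1), (α*β) * ((dc n k : ℂ) * (α*β)^k * (α+β)^(n-2*k))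
          = ∑ k ∈ range (n+2), (dc n k : ℂ) * (α*β)^(k+1) * (α+β)^(n-2*k) := by
        rw [Finset.sum_range_succ _ (n+1), dc_eq_zero n (n+1) (by omega)]
        push_cast
        rw [zero_mul, zero_mul, add_zero]
        refine Finset.sum_congr rfl fun k _ => ?_
        ring
      rw [hB]
      rw [Finset.sum_range_succ' _ (n+2)]  -- split k = 0 from RHS
      rw [Finset.sum_range_succ' _ (n+1)]  -- split k = 0 from first sum on LHS
      have hC : ∑ k ∈ range (n+1), (dc (n+1) (k+1) : ℂ) * (α*β)^(k+1) * (α+β)^(n+2-2*(k+1))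
          = ∑ k ∈ range (n+2), (dc (n+1) (k+1) : ℂ) * (α*β)^(k+1) * (α+β)^(n+2-2*(k+1)) := by
        rw [Finset.sum_range_succ _ (n+1), dc_eq_zero (n+1) (n+2) (by omega)]
        push_cast; rw [zero_mul, zero_mul, add_zero]
      rw [hC]
      have hD : ∀ k ∈ range (n+2),
          (dc (n+1) (k+1) : ℂ) * (α*β)^(k+1) * (α+β)^(n+2-2*(k+1))
            - (dc n k : ℂ) * (α*β)^(k+1) * (α+β)^(n-2*k)
          = (dc (n+2) (k+1) : ℂ) * (α*β)^(k+1) * (α+β)^(n+2-2*(k+1)) := by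
        intro k _
        have he : n+2-2*(k+1) = n-2*k := by omega
        rw [he, dc]
        push_cast
        ring
      have hE : ∑ k ∈ range (n+2), (dc (n+2) (k+1) : ℂ) * (α*β)^(k+1) * (α+β)^(n+2-2*(k+1))
          = (∑ k ∈ range (n+2), (dc (n+1) (k+1) : ℂ) * (α*β)^(k+1) * (α+β)^(n+2-2*(k+1)))
            - ∑ k ∈ range (n+2), (dc n k : ℂ) * (α*β)^(k+1) * (α+β)^(n-2*k) := by
        rw [← Finset.sum_sub_distrib]
        exact Finset.sum_congr rfl fun k hk => (hD k hk).symm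
      have h0 : (dc (n+2) 0 : ℂ) = (dc (n+1) 0 : ℂ) := by rw [dc]
      rw [hE, h0]
      ring

lemma prod_roots {d : ℕ} {ζ : ℂ} (hζ : IsPrimitiveRoot ζ d) (hd : 0 < d) (α w : ℂ) :
    ∏ i ∈ range d, (w - ζ^i * α) = w^d - α^d := by
  have h := X_pow_sub_C_eq_prod hζ hd (rfl : α ^ d = α ^ d)
  have := congrArg (Polynomial.eval w) h
  simpa [Polynomial.eval_prod] using this.symm

lemma prod_units {d : ℕ} {ζ : ℂ} (hζ : IsPrimitiveRoot ζ d) (hd : 0 < d) :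
    ∏ i ∈ range d, ζ^i = (-1)^(d+1) := by
  have h := prod_roots hζ hd 1 0
  simp only [mul_one] at h
  have h2 : ∏ i ∈ range d, (0 - ζ^i) = (-1)^d * ∏ i ∈ range d, ζ^i := by
    calc ∏ i ∈ range d, (0 - ζ^i) = ∏ i ∈ range d, (-1 * ζ^i) := by
          refine Finset.prod_congr rfl fun i _ => by ring
      _ = (-1)^d * ∏ i ∈ range d, ζ^i := by
          rw [Finset.prod_mul_distrib, Finset.prod_const, Finset.card_range]
  rw [h2, zero_pow hd.ne', one_pow, zero_sub] at h
  have hone : ((-1:ℂ))^d * ((-1:ℂ))^d = 1 := by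
    rw [← mul_pow]; norm_num
  calc ∏ i ∈ range d, ζ^i = ((-1:ℂ))^d * ((-1)^d * ∏ i ∈ range d, ζ^i) := by
        rw [← mul_assoc, hone, one_mul]
    _ = (-1)^d * (-1) := by rw [h]
    _ = (-1)^(d+1) := by rw [pow_succ]

lemma dc_head : ∀ n : ℕ, dc (n+1) 0 = 1
  | 0 => rfl
  | n+1 => dc_head n

lemma key_prod {d : ℕ} (hd : 0 < d) {ζ : ℂ} (hζ : IsPrimitiveRoot ζ d) (a b w : ℂ) :
    ∏ j ∈ range d, (w - (ζ^j * a + (ζ⁻¹)^j * b))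
      = (∑ k ∈ range (d+1), (dc d k : ℂ) * (a*b)^k * w^(d-2*k)) - a^d - b^d := by
  by_cases ha : a = 0
  · subst ha
    have hL : ∏ j ∈ range d, (w - (ζ^j * 0 + (ζ⁻¹)^j * b)) = w^d - b^d := by
      rw [← prod_roots hζ.inv hd b w]
      exact Finset.prod_congr rfl fun j _ => by ring
    have hR : ∑ k ∈ range (d+1), (dc d k : ℂ) * (0*b)^k * w^(d-2*k)
        = w^d := by
      rw [Finset.sum_eq_single 0]
      · obtain ⟨n, rfl⟩ := Nat.exists_eq_add_of_lt hd
        simp [dc_head]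
      · intro k _ hk
        rcases Nat.exists_eq_add_of_lt (Nat.pos_of_ne_zero hk) with ⟨m, rfl⟩
        simp [pow_succ]
      · intro h; exact absurd (Finset.mem_range.2 (by omega)) h
    rw [hL, hR]
    rw [zero_pow hd.ne']
    ring
  · -- a ≠ 0
    have hζ0 : ζ ≠ 0 := hζ.ne_zero hd.ne'
    obtain ⟨δ, hδ⟩ := IsAlgClosed.exists_pow_nat_eq (k := ℂ) (w^2 - 4*(a*b)) zero_lt_two
    set α : ℂ := (w + δ)/2 with hα_def
    set β : ℂ := (w - δ)/2 with hβ_def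
    have hsum : α + β = w := by rw [hα_def, hβ_def]; ring
    have hmul : α * β = a * b := by
      rw [hα_def, hβ_def]
      field_simp
      linear_combination -hδ
    have hfac : ∀ j ∈ range d, (w - (ζ^j*a + (ζ⁻¹)^j*b)) * (ζ^j * a)
        = -((ζ^j*a - α)*(ζ^j*a - β)) := by
      intro j _
      have h1 : (ζ⁻¹)^j * ζ^j = 1 := by
        rw [← mul_pow, inv_mul_cancel₀ hζ0, one_pow]
      linear_combination (-(ζ^j*a)) * hsum + hmul + (-(a*b)) * h1
    have hP : (∏ j ∈ range d, (w - (ζ^j*a + (ζ⁻¹)^j*b))) * (∏ j ∈ range d, (ζ^j * a))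
        = ∏ j ∈ range d, -((ζ^j*a - α)*(ζ^j*a - β)) := by
      rw [← Finset.prod_mul_distrib]
      exact Finset.prod_congr rfl hfac
    have hPU : ∏ j ∈ range d, (ζ^j * a) = (-1)^(d+1) * a^d := by
      rw [Finset.prod_mul_distrib, prod_units hζ hd, Finset.prod_const, Finset.card_range]
    have hprα : ∏ j ∈ range d, (ζ^j*a - α) = (-1)^d * (α^d - a^d) := by
      calc ∏ j ∈ range d, (ζ^j*a - α) = ∏ j ∈ range d, (-1 * (α - ζ^j*a)) := by
            exact Finset.prod_congr rfl fun j _ => by ring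
        _ = (-1)^d * ∏ j ∈ range d, (α - ζ^j*a) := by
            rw [Finset.prod_mul_distrib, Finset.prod_const, Finset.card_range]
        _ = (-1)^d * (α^d - a^d) := by rw [prod_roots hζ hd a α]
    have hprβ : ∏ j ∈ range d, (ζ^j*a - β) = (-1)^d * (β^d - a^d) := by
      calc ∏ j ∈ range d, (ζ^j*a - β) = ∏ j ∈ range d, (-1 * (β - ζ^j*a)) := by
            exact Finset.prod_congr rfl fun j _ => by ring
        _ = (-1)^d * ∏ j ∈ range d, (β - ζ^j*a) := by
            rw [Finset.prod_mul_distrib, Finset.prod_const, Finset.card_range]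
        _ = (-1)^d * (β^d - a^d) := by rw [prod_roots hζ hd a β]
    have hneg : ∏ j ∈ range d, -((ζ^j*a - α)*(ζ^j*a - β))
        = (-1)^d * ((∏ j ∈ range d, (ζ^j*a - α)) * (∏ j ∈ range d, (ζ^j*a - β))) := by
      calc ∏ j ∈ range d, -((ζ^j*a - α)*(ζ^j*a - β))
          = ∏ j ∈ range d, (-1 * ((ζ^j*a - α)*(ζ^j*a - β))) := by
            exact Finset.prod_congr rfl fun j _ => by ring
        _ = (-1)^d * ∏ j ∈ range d, ((ζ^j*a - α)*(ζ^j*a - β)) := by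
            rw [Finset.prod_mul_distrib, Finset.prod_const, Finset.card_range]
        _ = _ := by rw [Finset.prod_mul_distrib]
    rw [hPU, hneg, hprα, hprβ] at hP
    have hS : ∑ k ∈ range (d+1), (dc d k : ℂ) * (a*b)^k * w^(d-2*k) = α^d + β^d := by
      rw [← hsum, ← hmul]
      exact (dc_identity d α β).symm
    rw [hS]
    have hne : ((-1:ℂ))^(d+1) * a^d ≠ 0 := by
      apply mul_ne_zero
      · exact pow_ne_zero _ (by norm_num)
      · exact pow_ne_zero _ ha
    apply mul_right_cancel₀ hne
    rw [hP]
    have hab : α^d * β^d = a^d * b^d := by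
      rw [← mul_pow, hmul, mul_pow]
    set g : ℂ := (-1:ℂ)^d with hg
    have hε : g * g = 1 := by rw [hg, ← mul_pow]; norm_num
    have hgs : ((-1:ℂ))^(d+1) = g * (-1) := by rw [hg, pow_succ]
    rw [hgs]
    linear_combination (-(g*(a^d*α^d + a^d*β^d - a^d*a^d - α^d*β^d))) * hε + g * hab

open MvPolynomial

/-- exponent vector (i,j,k) for x^i y^j z^k -/
noncomputable def mk3 (i j k : ℕ) : Fin 3 →₀ ℕ :=
  Finsupp.single 0 i + Finsupp.single 1 j + Finsupp.single 2 k

lemma mk3_apply0 (i j k : ℕ) : mk3 i j k 0 = i := by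
  simp [mk3, Finsupp.single_apply]

lemma mk3_apply1 (i j k : ℕ) : mk3 i j k 1 = j := by
  simp [mk3, Finsupp.single_apply]

lemma mk3_apply2 (i j k : ℕ) : mk3 i j k 2 = k := by
  simp [mk3, Finsupp.single_apply]

lemma mk3_inj {i j k i' j' k' : ℕ} (h : mk3 i j k = mk3 i' j' k') :
    i = i' ∧ j = j' ∧ k = k' := by
  refine ⟨?_, ?_, ?_⟩
  · have := DFunLike.congr_fun h 0; simpa [mk3_apply0] using this
  · have := DFunLike.congr_fun h 1; simpa [mk3_apply1] using this
  · have := DFunLike.congr_fun h 2; simpa [mk3_apply2] using this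

lemma X_pows (i j k : ℕ) :
    (X 0 : MvPolynomial (Fin 3) ℂ)^i * X 1^j * X 2^k = monomial (mk3 i j k) 1 := by
  rw [X_pow_eq_monomial, X_pow_eq_monomial, X_pow_eq_monomial, monomial_mul, monomial_mul]
  simp [mk3]

lemma support_sum_monomial {ι : Type*} (J : Finset ι) (g : ι → (Fin 3 →₀ ℕ)) (a : ι → ℂ)
    (hinj : Set.InjOn g J) (ha : ∀ j ∈ J, a j ≠ 0) :
    (∑ j ∈ J, monomial (g j) (a j)).support = J.image g := by
  ext m
  simp only [mem_support_iff, coeff_sum, coeff_monomial, Finset.mem_image]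
  constructor
  · intro h
    by_contra hc
    push_neg at hc
    refine h (Finset.sum_eq_zero fun j hj => ?_)
    rw [if_neg (hc j hj)]
  · rintro ⟨j0, hj0, rfl⟩
    rw [Finset.sum_eq_single_of_mem j0 hj0]
    · rw [if_pos rfl]; exact ha j0 hj0
    · intro j hj hne
      rw [if_neg (fun he => hne (hinj hj hj0 he))]

lemma support_add_disj {p q : MvPolynomial (Fin 3) ℂ}
    (h : Disjoint p.support q.support) : (p+q).support = p.support ∪ q.support := by
  ext m
  simp only [mem_support_iff, coeff_add, Finset.mem_union]
  constructor
  · intro hm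
    by_contra hc
    push_neg at hc
    rw [hc.1, hc.2, add_zero] at hm
    exact hm rfl
  · intro hm
    rcases hm with h1 | h1
    · have h2 : coeff m q = 0 := by
        by_contra h2
        exact (Finset.disjoint_left.1 h (mem_support_iff.2 h1)) (mem_support_iff.2 h2)
      rw [h2, add_zero]; exact h1
    · have h2 : coeff m p = 0 := by
        by_contra h2
        exact (Finset.disjoint_left.1 h (mem_support_iff.2 h2)) (mem_support_iff.2 h1)
      rw [h2, zero_add]; exact h1

noncomputable def Ap (d : ℕ) : MvPolynomial (Fin 3) ℂ := X 0 ^ d + X 1 ^ d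

noncomputable def Dpoly (d : ℕ) : MvPolynomial (Fin 3) ℂ :=
  ∑ k ∈ range (d/2+1), C ((dc d k : ℂ)) * ((X 0 * X 1)^k * X 2^(d - 2*k))

lemma trunc_sum (d : ℕ) (s z' : ℂ) :
    ∑ k ∈ range (d/2+1), (dc d k : ℂ) * s^k * z'^(d-2*k)
      = ∑ k ∈ range (d+1), (dc d k : ℂ) * s^k * z'^(d-2*k) := by
  apply Finset.sum_subset
  · exact Finset.range_subset_range.2 (by omega)
  · intro k _ hk
    rw [Finset.mem_range, not_lt] at hk
    rw [dc_eq_zero d k (by omega)]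
    simp

lemma main_id (d : ℕ) (hd : 0 < d) (ξ : ℂ) (hζ : IsPrimitiveRoot ξ d)
    (F : MvPolynomial (Fin 3) ℂ)
    (hF : F = ∏ j ∈ Finset.range d,
        ((C (ξ ^ j) * X 0 + C (ξ ^ (-(j : ℤ))) * X 1 + X 2) *
          (C (ξ ^ j) * X 0 + C (ξ ^ (-(j : ℤ))) * X 1 - X 2))) :
    F = (Ap d - Dpoly d) * (Ap d - C ((-1:ℂ)^d) * Dpoly d) := by
  have hzp : ∀ j : ℕ, ξ ^ (-(j:ℤ)) = (ξ⁻¹)^j := fun j => by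
    rw [zpow_neg, zpow_natCast, inv_pow]
  apply MvPolynomial.funext
  intro v
  set a := v 0 with ha
  set b := v 1 with hb
  set z := v 2 with hz
  set S : ℂ := ∑ k ∈ range (d+1), (dc d k : ℂ) * (a*b)^k * z^(d-2*k) with hS
  -- eval of RHS
  have hevA : eval v (Ap d) = a^d + b^d := by simp [Ap, ha, hb]
  have hevD : eval v (Dpoly d) = S := by
    rw [Dpoly, hS, eval_sum]
    have hterm : ∀ k ∈ range (d/2+1),
        eval v (C ((dc d k : ℂ)) * ((X 0 * X 1)^k * X 2^(d-2*k)))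
          = (dc d k : ℂ) * (a*b)^k * z^(d-2*k) := by
      intro k _
      simp only [map_mul, map_pow, eval_C, eval_X]
      ring
    rw [Finset.sum_congr rfl hterm, trunc_sum d (a*b) z]
  rw [map_mul, map_sub, map_sub, map_mul, hevA, hevD, eval_C]
  -- eval of LHS
  rw [hF, eval_prod]
  have hfac : ∀ j ∈ range d, eval v
      ((C (ξ ^ j) * X 0 + C (ξ ^ (-(j:ℤ))) * X 1 + X 2) *
        (C (ξ ^ j) * X 0 + C (ξ ^ (-(j:ℤ))) * X 1 - X 2))
      = (-1) * (z - (ξ^j * a + (ξ⁻¹)^j * b)) * ((-1) * ((-z) - (ξ^j * a + (ξ⁻¹)^j * b))) := by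
    intro j _
    rw [hzp j]
    simp only [map_mul, map_add, map_sub, eval_C, eval_X]
    ring
  rw [Finset.prod_congr rfl hfac]
  have hsplit : ∏ j ∈ range d,
      ((-1) * (z - (ξ^j * a + (ξ⁻¹)^j * b)) * ((-1) * ((-z) - (ξ^j * a + (ξ⁻¹)^j * b))))
      = ((-1)^d * ∏ j ∈ range d, (z - (ξ^j * a + (ξ⁻¹)^j * b)))
        * ((-1)^d * ∏ j ∈ range d, ((-z) - (ξ^j * a + (ξ⁻¹)^j * b))) := by
    rw [Finset.prod_mul_distrib, Finset.prod_mul_distrib, Finset.prod_mul_distrib,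
      Finset.prod_const, Finset.card_range]
  rw [hsplit, key_prod hd hζ a b z, key_prod hd hζ a b (-z)]
  have hSneg : ∑ k ∈ range (d+1), (dc d k : ℂ) * (a*b)^k * (-z)^(d-2*k)
      = (-1)^d * S := by
    rw [hS, Finset.mul_sum]
    refine Finset.sum_congr rfl fun k _ => ?_
    rcases Nat.lt_or_ge d (2*k) with h1 | h1
    · rw [dc_eq_zero d k h1]; simp
    · rw [neg_pow]
      have h2 : ((-1:ℂ))^(d-2*k) = (-1)^d := by
        have h3 : ((-1:ℂ))^(d-2*k) * ((-1:ℂ))^(2*k) = (-1)^d := by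
          rw [← pow_add]; congr 1; omega
        have h4 : ((-1:ℂ))^(2*k) = 1 := by
          rw [pow_mul]; norm_num
        rw [h4, mul_one] at h3
        exact h3
      rw [h2]; ring
  rw [hSneg, ← hS]
  rcases Nat.even_or_odd d with hpar | hpar
  · rw [hpar.neg_one_pow]; ring
  · rw [hpar.neg_one_pow]; ring

/-- coefficient of the square of the Dickson part -/
def EZ (d s : ℕ) : ℤ := ∑ p ∈ Finset.HasAntidiagonal.antidiagonal s, dc d p.1 * dc d p.2

lemma EZ_sign (d s : ℕ) (hs : s ≤ 2*(d/2)) : 0 < (-1)^s * EZ d s := by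
  rw [EZ, Finset.mul_sum]
  have hterm : ∀ p ∈ Finset.HasAntidiagonal.antidiagonal s,
      (-1)^s * (dc d p.1 * dc d p.2) = ((-1)^p.1 * dc d p.1) * ((-1)^p.2 * dc d p.2) := by
    intro p hp
    rw [Finset.HasAntidiagonal.mem_antidiagonal] at hp
    rw [← hp, pow_add]
    ring
  rw [Finset.sum_congr rfl hterm]
  apply Finset.sum_pos'
  · intro p _
    rcases Nat.lt_or_ge d (2*p.1) with h1 | h1
    · rw [dc_eq_zero d p.1 h1]; simp
    rcases Nat.lt_or_ge d (2*p.2) with h2 | h2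
    · rw [dc_eq_zero d p.2 h2]; simp
    exact le_of_lt (mul_pos (dc_sign d p.1 h1) (dc_sign d p.2 h2))
  · refine ⟨(min s (d/2), s - min s (d/2)), ?_, ?_⟩
    · rw [Finset.HasAntidiagonal.mem_antidiagonal]; omega
    · apply mul_pos
      · exact dc_sign d _ (by omega)
      · exact dc_sign d _ (by omega)

lemma EZ_ne (d s : ℕ) (hs : s ≤ 2*(d/2)) : (EZ d s : ℂ) ≠ 0 := by
  have := EZ_sign d s hs
  have h2 : EZ d s ≠ 0 := by
    intro h; rw [h, mul_zero] at this; exact lt_irrefl 0 this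
  exact_mod_cast Int.cast_ne_zero.2 h2

lemma mk3_add (i j k i' j' k' : ℕ) : mk3 i j k + mk3 i' j' k' = mk3 (i+i') (j+j') (k+k') := by
  simp only [mk3, Finsupp.single_add]
  abel

lemma Dpoly_eq (d : ℕ) :
    Dpoly d = ∑ k ∈ range (d/2+1), monomial (mk3 k k (d-2*k)) ((dc d k : ℂ)) := by
  refine Finset.sum_congr rfl fun k _ => ?_
  rw [mul_pow, X_pows k k (d-2*k), C_mul_monomial, mul_one]

lemma Dsq (d : ℕ) :
    Dpoly d * Dpoly d
      = ∑ s ∈ range (2*(d/2)+1), monomial (mk3 s s (2*d-2*s)) ((EZ d s : ℂ)) := by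
  rw [Dpoly_eq, Finset.sum_mul_sum, ← Finset.sum_product']
  rw [← Finset.sum_fiberwise_of_maps_to
    (g := fun p : ℕ × ℕ => p.1 + p.2) (t := range (2*(d/2)+1))
    (fun p hp => by
      rw [Finset.mem_product, Finset.mem_range, Finset.mem_range] at hp
      exact Finset.mem_range.2 (by show p.1 + p.2 < 2*(d/2)+1; omega))]
  refine Finset.sum_congr rfl fun s hs => ?_
  have hterm : ∀ p ∈ (range (d/2+1) ×ˢ range (d/2+1)).filter (fun p => p.1 + p.2 = s),
      monomial (mk3 p.1 p.1 (d-2*p.1)) ((dc d p.1 : ℂ)) *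
        monomial (mk3 p.2 p.2 (d-2*p.2)) ((dc d p.2 : ℂ))
      = monomial (mk3 s s (2*d-2*s)) ((dc d p.1 * dc d p.2 : ℤ) : ℂ) := by
    intro p hp
    rw [Finset.mem_filter, Finset.mem_product, Finset.mem_range, Finset.mem_range] at hp
    obtain ⟨⟨h1, h2⟩, h3⟩ := hp
    rw [monomial_mul, mk3_add]
    have e1 : p.1 + p.2 = s := h3
    have e2 : (d-2*p.1) + (d-2*p.2) = 2*d-2*s := by omega
    rw [e1, e2]
    push_cast
    rfl
  rw [Finset.sum_congr rfl hterm]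
  rw [← map_sum (monomial (mk3 s s (2*d-2*s)))]
  congr 1
  rw [EZ]
  push_cast
  rw [← Finset.sum_subset (s₁ := (range (d/2+1) ×ˢ range (d/2+1)).filter (fun p => p.1 + p.2 = s))
      (s₂ := Finset.HasAntidiagonal.antidiagonal s) ?_ ?_]
  · intro p hp
    rw [Finset.mem_filter] at hp
    exact Finset.HasAntidiagonal.mem_antidiagonal.2 hp.2
  · intro p hp hnp
    rw [Finset.HasAntidiagonal.mem_antidiagonal] at hp
    rw [Finset.mem_filter, Finset.mem_product, Finset.mem_range, Finset.mem_range] at hnp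
    push_neg at hnp
    rcases Nat.lt_or_ge p.1 (d/2+1) with h1 | h1
    · rcases Nat.lt_or_ge p.2 (d/2+1) with h2 | h2
      · exact absurd hp (hnp ⟨h1, h2⟩)
      · rw [dc_eq_zero d p.2 (by omega)]
        push_cast; ring
    · rw [dc_eq_zero d p.1 (by omega)]
      push_cast; ring

lemma card_support_add {p q : MvPolynomial (Fin 3) ℂ}
    (h : Disjoint p.support q.support) :
    (p+q).support.card = p.support.card + q.support.card := by
  rw [support_add_disj h, Finset.card_union_of_disjoint h]

lemma Apsq (d : ℕ) : Ap d * Ap d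
    = monomial (mk3 (2*d) 0 0) 1 + monomial (mk3 0 (2*d) 0) 1
      + monomial (mk3 d d 0) (2:ℂ) := by
  have e2 : monomial (mk3 d d 0) (2:ℂ) = monomial (mk3 d d 0) (1:ℂ) + monomial (mk3 d d 0) (1:ℂ) := by
    rw [← map_add (monomial (mk3 d d 0)) (1:ℂ) 1]; norm_num
  rw [Ap, e2, ← X_pows, ← X_pows, ← X_pows]
  ring

lemma single0_add_mk3 (n i j k : ℕ) :
    Finsupp.single (0 : Fin 3) n + mk3 i j k = mk3 (n+i) j k := by
  simp only [mk3, Finsupp.single_add]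
  abel

lemma single1_add_mk3 (n i j k : ℕ) :
    Finsupp.single (1 : Fin 3) n + mk3 i j k = mk3 i (n+j) k := by
  simp only [mk3, Finsupp.single_add]
  abel

lemma ApD (d : ℕ) : Ap d * Dpoly d
    = (∑ k ∈ range (d/2+1), monomial (mk3 (d+k) k (d-2*k)) ((dc d k : ℂ)))
      + ∑ k ∈ range (d/2+1), monomial (mk3 k (d+k) (d-2*k)) ((dc d k : ℂ)) := by
  rw [Ap, Dpoly_eq, add_mul, Finset.mul_sum, Finset.mul_sum]
  congr 1
  · refine Finset.sum_congr rfl fun k _ => ?_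
    rw [X_pow_eq_monomial, monomial_mul, one_mul, single0_add_mk3]
  · refine Finset.sum_congr rfl fun k _ => ?_
    rw [X_pow_eq_monomial, monomial_mul, one_mul, single1_add_mk3]

lemma card_odd (d : ℕ) (hd : 2 ≤ d) (hodd : Odd d) (F : MvPolynomial (Fin 3) ℂ)
    (hmain : F = (Ap d - Dpoly d) * (Ap d - C ((-1:ℂ)^d) * Dpoly d)) :
    F.support.card = d + 3 := by
  have hC : (C ((-1:ℂ)^d) : MvPolynomial (Fin 3) ℂ) = -1 := by rw [hodd.neg_one_pow, map_neg, map_one]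
  have hd2 : 2*(d/2)+1 = d := by
    obtain ⟨m, rfl⟩ := hodd; omega
  have hF2 : F = (monomial (mk3 (2*d) 0 0) 1 + monomial (mk3 0 (2*d) 0) 1
      + monomial (mk3 d d 0) (2:ℂ))
      + ∑ s ∈ range d, monomial (mk3 s s (2*d-2*s)) (-(EZ d s : ℂ)) := by
    have hneg : ∑ s ∈ range d, monomial (mk3 s s (2*d-2*s)) (-(EZ d s : ℂ))
        = - ∑ s ∈ range d, monomial (mk3 s s (2*d-2*s)) ((EZ d s : ℂ)) := by
      rw [← Finset.sum_neg_distrib]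
      exact Finset.sum_congr rfl fun s _ => by rw [map_neg]
    have hDsq : Dpoly d * Dpoly d
        = ∑ s ∈ range d, monomial (mk3 s s (2*d-2*s)) ((EZ d s : ℂ)) := by
      rw [Dsq d, hd2]
    rw [hneg, hmain, hC, ← Apsq d, ← hDsq]
    ring
  rw [hF2]
  -- supports of monomial pieces
  have hne2 : (2:ℂ) ≠ 0 := by norm_num
  have s1 : (monomial (mk3 (2*d) 0 0) (1:ℂ)).support = {mk3 (2*d) 0 0} := by
    rw [support_monomial, if_neg one_ne_zero]
  have s2 : (monomial (mk3 0 (2*d) 0) (1:ℂ)).support = {mk3 0 (2*d) 0} := by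
    rw [support_monomial, if_neg one_ne_zero]
  have s3 : (monomial (mk3 d d 0) (2:ℂ)).support = {mk3 d d 0} := by
    rw [support_monomial, if_neg hne2]
  have sSum : (∑ s ∈ range d, monomial (mk3 s s (2*d-2*s)) (-(EZ d s : ℂ))).support
      = (range d).image (fun s => mk3 s s (2*d-2*s)) := by
    apply support_sum_monomial
    · intro s _ s' _ h
      exact (mk3_inj h).1
    · intro s hs
      rw [Finset.mem_range] at hs
      exact neg_ne_zero.2 (EZ_ne d s (by omega))
  have d12 : Disjoint (monomial (mk3 (2*d) 0 0) (1:ℂ)).support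
      (monomial (mk3 0 (2*d) 0) (1:ℂ)).support := by
    rw [s1, s2, Finset.disjoint_singleton]
    intro h
    have := (mk3_inj h).1
    omega
  have d123 : Disjoint ((monomial (mk3 (2*d) 0 0) (1:ℂ)) + monomial (mk3 0 (2*d) 0) 1).support
      (monomial (mk3 d d 0) (2:ℂ)).support := by
    rw [support_add_disj d12, s1, s2, s3]
    rw [Finset.disjoint_left]
    intro m hm hm'
    rw [Finset.mem_singleton] at hm'
    rw [Finset.mem_union, Finset.mem_singleton, Finset.mem_singleton] at hm
    subst hm'
    rcases hm with h | h
    · have := (mk3_inj h).1; omega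
    · have := (mk3_inj h).1; omega
  have dbig : Disjoint ((monomial (mk3 (2*d) 0 0) (1:ℂ)) + monomial (mk3 0 (2*d) 0) 1
      + monomial (mk3 d d 0) 2).support
      (∑ s ∈ range d, monomial (mk3 s s (2*d-2*s)) (-(EZ d s : ℂ))).support := by
    rw [support_add_disj d123, support_add_disj d12, s1, s2, s3, sSum]
    rw [Finset.disjoint_left]
    intro m hm hm'
    rw [Finset.mem_image] at hm'
    obtain ⟨s, hs, rfl⟩ := hm'
    rw [Finset.mem_range] at hs
    simp only [Finset.mem_union, Finset.mem_singleton] at hm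
    rcases hm with (h | h) | h
    · have := (mk3_inj h).2.2; omega
    · have := (mk3_inj h).2.2; omega
    · have := (mk3_inj h).2.2; omega
  rw [card_support_add dbig, card_support_add d123, card_support_add d12, s1, s2, s3, sSum,
    Finset.card_image_of_injOn (fun s _ s' _ h => (mk3_inj h).1), Finset.card_range,
    Finset.card_singleton, Finset.card_singleton, Finset.card_singleton]
  omega

lemma card_even (d : ℕ) (hd : 2 ≤ d) (heven : Even d) (F : MvPolynomial (Fin 3) ℂ)
    (hmain : F = (Ap d - Dpoly d) * (Ap d - C ((-1:ℂ)^d) * Dpoly d)) :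
    F.support.card = 2 * d + 5 := by
  have hC : (C ((-1:ℂ)^d) : MvPolynomial (Fin 3) ℂ) = 1 := by
    rw [heven.neg_one_pow, map_one]
  have hd2 : 2*(d/2) = d := by
    obtain ⟨m, rfl⟩ := heven; omega
  -- pieces
  set m1 : MvPolynomial (Fin 3) ℂ := monomial (mk3 (2*d) 0 0) 1 with hm1
  set m2 : MvPolynomial (Fin 3) ℂ := monomial (mk3 0 (2*d) 0) 1 with hm2
  set m3 : MvPolynomial (Fin 3) ℂ := monomial (mk3 d d 0) (2 + (EZ d d : ℂ)) with hm3
  set Q2 : MvPolynomial (Fin 3) ℂ :=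
    ∑ s ∈ range d, monomial (mk3 s s (2*d-2*s)) ((EZ d s : ℂ)) with hQ2
  set Q3 : MvPolynomial (Fin 3) ℂ :=
    ∑ k ∈ range (d/2+1), monomial (mk3 (d+k) k (d-2*k)) (-2*(dc d k : ℂ)) with hQ3
  set Q4 : MvPolynomial (Fin 3) ℂ :=
    ∑ k ∈ range (d/2+1), monomial (mk3 k (d+k) (d-2*k)) (-2*(dc d k : ℂ)) with hQ4
  have hF2 : F = m1 + m2 + m3 + Q2 + Q3 + Q4 := by
    have hDsq' : Dpoly d * Dpoly d = Q2 + monomial (mk3 d d 0) ((EZ d d : ℂ)) := by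
      have h1 : 2*(d/2)+1 = d+1 := by omega
      rw [Dsq d, h1, Finset.sum_range_succ, Nat.sub_self]
    have hm3' : m3 = monomial (mk3 d d 0) (2:ℂ) + monomial (mk3 d d 0) ((EZ d d : ℂ)) := by
      rw [hm3, ← map_add]
    have hQ3' : Q3 = - (∑ k ∈ range (d/2+1), monomial (mk3 (d+k) k (d-2*k)) ((dc d k : ℂ)))
        - ∑ k ∈ range (d/2+1), monomial (mk3 (d+k) k (d-2*k)) ((dc d k : ℂ)) := by
      rw [hQ3, ← Finset.sum_neg_distrib, ← Finset.sum_sub_distrib]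
      refine Finset.sum_congr rfl fun k _ => ?_
      have h2 : (-2:ℂ)*(dc d k : ℂ) = -(dc d k : ℂ) - (dc d k : ℂ) := by ring
      rw [h2, map_sub, map_neg]
    have hQ4' : Q4 = - (∑ k ∈ range (d/2+1), monomial (mk3 k (d+k) (d-2*k)) ((dc d k : ℂ)))
        - ∑ k ∈ range (d/2+1), monomial (mk3 k (d+k) (d-2*k)) ((dc d k : ℂ)) := by
      rw [hQ4, ← Finset.sum_neg_distrib, ← Finset.sum_sub_distrib]
      refine Finset.sum_congr rfl fun k _ => ?_
      have h2 : (-2:ℂ)*(dc d k : ℂ) = -(dc d k : ℂ) - (dc d k : ℂ) := by ring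
      rw [h2, map_sub, map_neg]
    rw [hmain, hC, one_mul, hm1, hm2, hm3', hQ3', hQ4']
    have hexp : (Ap d - Dpoly d) * (Ap d - Dpoly d)
        = Ap d * Ap d + Dpoly d * Dpoly d - Ap d * Dpoly d - Ap d * Dpoly d := by ring
    rw [hexp, Apsq d, hDsq', ApD d]
    ring
  rw [hF2]
  -- supports
  have hEZd : (0:ℤ) < EZ d d := by
    have := EZ_sign d d (by omega)
    rcases Nat.even_or_odd d with hp | hp
    · rwa [hp.neg_one_pow, one_mul] at this
    · exact absurd hp (by simpa using heven)
  have s1 : m1.support = {mk3 (2*d) 0 0} := by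
    rw [hm1, support_monomial, if_neg one_ne_zero]
  have s2 : m2.support = {mk3 0 (2*d) 0} := by
    rw [hm2, support_monomial, if_neg one_ne_zero]
  have s3 : m3.support = {mk3 d d 0} := by
    have hco : (2 + (EZ d d : ℂ)) ≠ 0 := by
      have h2 : ((2 + EZ d d : ℤ) : ℂ) ≠ 0 := Int.cast_ne_zero.2 (by omega)
      push_cast at h2
      exact h2
    rw [hm3, support_monomial, if_neg hco]
  have sQ2 : Q2.support = (range d).image (fun s => mk3 s s (2*d-2*s)) := by
    rw [hQ2]
    apply support_sum_monomial
    · intro s _ s' _ h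
      exact (mk3_inj h).1
    · intro s hs
      rw [Finset.mem_range] at hs
      exact EZ_ne d s (by omega)
  have hdcne : ∀ k, k ∈ range (d/2+1) → (-2*(dc d k : ℂ)) ≠ 0 := by
    intro k hk
    rw [Finset.mem_range] at hk
    apply mul_ne_zero (by norm_num)
    have := dc_sign d k (by omega)
    have h2 : dc d k ≠ 0 := by
      intro h; rw [h, mul_zero] at this; exact lt_irrefl 0 this
    exact_mod_cast Int.cast_ne_zero.2 h2
  have sQ3 : Q3.support = (range (d/2+1)).image (fun k => mk3 (d+k) k (d-2*k)) := by
    rw [hQ3]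
    apply support_sum_monomial
    · intro k _ k' _ h
      exact (mk3_inj h).2.1
    · exact hdcne
  have sQ4 : Q4.support = (range (d/2+1)).image (fun k => mk3 k (d+k) (d-2*k)) := by
    rw [hQ4]
    apply support_sum_monomial
    · intro k _ k' _ h
      exact (mk3_inj h).1
    · exact hdcne
  -- disjointness
  have D1 : Disjoint m1.support m2.support := by
    rw [s1, s2, Finset.disjoint_singleton]
    intro h; have := (mk3_inj h).1; omega
  have D2 : Disjoint (m1+m2).support m3.support := by
    rw [support_add_disj D1, s1, s2, s3, Finset.disjoint_left]
    intro m hm hm'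
    rw [Finset.mem_singleton] at hm'
    subst hm'
    simp only [Finset.mem_union, Finset.mem_singleton] at hm
    rcases hm with h | h
    · have := (mk3_inj h).1; omega
    · have := (mk3_inj h).1; omega
  have D3 : Disjoint (m1+m2+m3).support Q2.support := by
    rw [support_add_disj D2, support_add_disj D1, s1, s2, s3, sQ2, Finset.disjoint_left]
    intro m hm hm'
    rw [Finset.mem_image] at hm'
    obtain ⟨s, hs, rfl⟩ := hm'
    rw [Finset.mem_range] at hs
    simp only [Finset.mem_union, Finset.mem_singleton] at hm
    rcases hm with (h | h) | h
    · have := (mk3_inj h).2.2; omega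
    · have := (mk3_inj h).2.2; omega
    · have := (mk3_inj h).2.2; omega
  have D4 : Disjoint (m1+m2+m3+Q2).support Q3.support := by
    rw [support_add_disj D3, support_add_disj D2, support_add_disj D1,
      s1, s2, s3, sQ2, sQ3, Finset.disjoint_left]
    intro m hm hm'
    rw [Finset.mem_image] at hm'
    obtain ⟨k, hk, rfl⟩ := hm'
    rw [Finset.mem_range] at hk
    simp only [Finset.mem_union, Finset.mem_singleton, Finset.mem_image] at hm
    rcases hm with ((h | h) | h) | h
    · obtain ⟨h1, h2, h3⟩ := mk3_inj h; omega
    · obtain ⟨h1, h2, h3⟩ := mk3_inj h; omega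
    · obtain ⟨h1, h2, h3⟩ := mk3_inj h; omega
    · obtain ⟨s, hs, h⟩ := h
      rw [Finset.mem_range] at hs
      obtain ⟨h1, h2, h3⟩ := mk3_inj h; omega
  have D5 : Disjoint (m1+m2+m3+Q2+Q3).support Q4.support := by
    rw [support_add_disj D4, support_add_disj D3, support_add_disj D2, support_add_disj D1,
      s1, s2, s3, sQ2, sQ3, sQ4, Finset.disjoint_left]
    intro m hm hm'
    rw [Finset.mem_image] at hm'
    obtain ⟨k, hk, rfl⟩ := hm'
    rw [Finset.mem_range] at hk
    simp only [Finset.mem_union, Finset.mem_singleton, Finset.mem_image] at hm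
    rcases hm with (((h | h) | h) | h) | h
    · obtain ⟨h1, h2, h3⟩ := mk3_inj h; omega
    · obtain ⟨h1, h2, h3⟩ := mk3_inj h; omega
    · obtain ⟨h1, h2, h3⟩ := mk3_inj h; omega
    · obtain ⟨s, hs, h⟩ := h
      rw [Finset.mem_range] at hs
      obtain ⟨h1, h2, h3⟩ := mk3_inj h; omega
    · obtain ⟨k', hk', h⟩ := h
      rw [Finset.mem_range] at hk'
      obtain ⟨h1, h2, h3⟩ := mk3_inj h; omega
  rw [card_support_add D5, card_support_add D4, card_support_add D3, card_support_add D2,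
    card_support_add D1, s1, s2, s3, sQ2, sQ3, sQ4,
    Finset.card_image_of_injOn (fun s _ s' _ h => (mk3_inj h).1),
    Finset.card_image_of_injOn (fun k _ k' _ h => (mk3_inj h).2.1),
    Finset.card_image_of_injOn (fun k _ k' _ h => (mk3_inj h).1),
    Finset.card_range, Finset.card_range]
  simp only [Finset.card_singleton]
  omega

/-- For `d ≥ 2` and `ξ = e^{2πi/d}`, the degree-`2d` form
`F = ∏_{j=0}^{d-1} (ξ^j x + ξ^{-j} y + z)(ξ^j x + ξ^{-j} y - z)` in `ℂ[x,y,z]`,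
invariant under the dihedral group `D_{2d}`, has exactly `d + 3` monomials with
non-zero coefficient if `d` is odd and `2d + 5` if `d` is even. -/
theorem dihedral_invariant_form_support_card (d : ℕ) (hd : 2 ≤ d)
    (ξ : ℂ) (hξ : ξ = Complex.exp (2 * Real.pi * Complex.I / d))
    (F : MvPolynomial (Fin 3) ℂ)
    (hF : F = ∏ j ∈ Finset.range d,
        ((MvPolynomial.C (ξ ^ j) * MvPolynomial.X 0 +
            MvPolynomial.C (ξ ^ (-(j : ℤ))) * MvPolynomial.X 1 + MvPolynomial.X 2) *
          (MvPolynomial.C (ξ ^ j) * MvPolynomial.X 0 +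
            MvPolynomial.C (ξ ^ (-(j : ℤ))) * MvPolynomial.X 1 - MvPolynomial.X 2))) :
    (Odd d → F.support.card = d + 3) ∧ (Even d → F.support.card = 2 * d + 5) := by
  have hζ : IsPrimitiveRoot ξ d := by
    rw [hξ]
    exact Complex.isPrimitiveRoot_exp d (by omega)
  have hmain := main_id d (by omega) ξ hζ F hF
  constructor
  · intro hodd
    exact card_odd d hd hodd F hmain
  · intro heven
    exact card_even d hd heven F hmain
end
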